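/- Let 0 ≤ α < n and let K^α be an α-fractional kernel that is elliptic in the sense of Stein: there is a unit vector u₀ and c > 0 with |K^α(x, x + t u₀)| ≥ c|t|^{α-n} for all t ∈ ℝ. Suppose σ, ω are doubling measures. If the associated operator T^α satisfies the norm inequality ‖T^α_σ f‖_{L²(ω)} ≤ 𝔑 ‖f‖_{L²(σ)} uniformly over admissible truncations, then the classical Muckenhoupt constant satisfies √(A₂^α(σ,ω)) ≤ C·𝔑 for a constant C depending only on n, α, the Calderón–Zygmund constant of K^α, the ellipticity constant c, and the doubling constants of σ and ω. -/

import Mathlib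

open MeasureTheory ENNReal

noncomputable section

/-- The axis-parallel cube in Euclidean `ℝⁿ` with center `c` and side length `l`. -/
def CubeE (n : ℕ) (c : EuclideanSpace ℝ (Fin n)) (l : ℝ) :
    Set (EuclideanSpace ℝ (Fin n)) :=
  {x | ∀ i, |x i - c i| ≤ l / 2}

/-- A measure is doubling with constant `C` if `μ(2Q) ≤ C μ(Q)` for all cubes `Q`. -/
def IsDoublingE {n : ℕ} (μ : Measure (EuclideanSpace ℝ (Fin n))) (C : ℝ) : Prop :=
  ∀ (c : EuclideanSpace ℝ (Fin n)) (l : ℝ), 0 < l →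
    μ (CubeE n c (2 * l)) ≤ ENNReal.ofReal C * μ (CubeE n c l)

lemma euclid_coord_le {n : ℕ} (v : EuclideanSpace ℝ (Fin n)) (i : Fin n) : |v i| ≤ ‖v‖ := by
  rw [EuclideanSpace.norm_eq v,
    show |v i| = Real.sqrt (‖v i‖^2) by rw [Real.sqrt_sq_eq_abs]; simp]
  apply Real.sqrt_le_sqrt
  exact Finset.single_le_sum (f := fun j => ‖v j‖^2) (fun j _ => sq_nonneg _) (Finset.mem_univ i)

lemma euclid_norm_le {n : ℕ} (v : EuclideanSpace ℝ (Fin n)) {M : ℝ} (hM : 0 ≤ M)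
    (h : ∀ i, |v i| ≤ M) : ‖v‖ ≤ Real.sqrt n * M := by
  rw [EuclideanSpace.norm_eq]
  have hb : ∑ i, ‖v i‖^2 ≤ (n : ℝ) * M^2 := by
    calc ∑ i, ‖v i‖^2 ≤ ∑ _i : Fin n, M^2 := by
          apply Finset.sum_le_sum; intro i _
          exact pow_le_pow_left₀ (norm_nonneg _) (by simpa using h i) 2
      _ = (n : ℝ) * M^2 := by simp [Finset.sum_const]
  calc Real.sqrt (∑ i, ‖v i‖^2) ≤ Real.sqrt ((n:ℝ) * M^2) := Real.sqrt_le_sqrt hb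
    _ = Real.sqrt n * M := by rw [Real.sqrt_mul (by positivity), Real.sqrt_sq hM]

lemma cubeE_isClosed (n : ℕ) (c : EuclideanSpace ℝ (Fin n)) (l : ℝ) :
    IsClosed (CubeE n c l) := by
  have : CubeE n c l = ⋂ i, {x : EuclideanSpace ℝ (Fin n) | |x i - c i| ≤ l / 2} := by
    ext x; simp [CubeE, Set.mem_iInter]
  rw [this]
  exact isClosed_iInter fun i => isClosed_le (by fun_prop) continuous_const

lemma cubeE_dist_le {n : ℕ} {c : EuclideanSpace ℝ (Fin n)} {l : ℝ} (hl : 0 ≤ l)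
    {x : EuclideanSpace ℝ (Fin n)} (hx : x ∈ CubeE n c l) :
    dist x c ≤ Real.sqrt n * (l / 2) := by
  rw [dist_eq_norm]
  exact euclid_norm_le _ (by linarith) (fun i => by simpa using hx i)

lemma cubeE_subset_ball (n : ℕ) (c : EuclideanSpace ℝ (Fin n)) (l : ℝ) (hl : 0 ≤ l) :
    CubeE n c l ⊆ Metric.closedBall c (Real.sqrt n * (l / 2)) :=
  fun _ hx => cubeE_dist_le hl hx

lemma cubeE_isCompact (n : ℕ) (c : EuclideanSpace ℝ (Fin n)) {l : ℝ} (hl : 0 ≤ l) :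
    IsCompact (CubeE n c l) :=
  (isCompact_closedBall c _).of_isClosed_subset (cubeE_isClosed n c l)
    (cubeE_subset_ball n c l hl)

lemma cubeE_mono (n : ℕ) (c : EuclideanSpace ℝ (Fin n)) {l l' : ℝ} (h : l ≤ l') :
    CubeE n c l ⊆ CubeE n c l' := fun x hx i => le_trans (hx i) (by linarith)

lemma doubling_iter {n : ℕ} {μ : Measure (EuclideanSpace ℝ (Fin n))} {C : ℝ}
    (hμ : IsDoublingE μ C) (c : EuclideanSpace ℝ (Fin n)) {L : ℝ} (hL : 0 < L) (k : ℕ) :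
    μ (CubeE n c (2 ^ k * L)) ≤ (ENNReal.ofReal C) ^ k * μ (CubeE n c L) := by
  induction k with
  | zero => simp
  | succ k ih =>
    have h2 : (2:ℝ) ^ (k+1) * L = 2 * (2 ^ k * L) := by ring
    rw [h2]
    calc μ (CubeE n c (2 * (2 ^ k * L))) ≤ ENNReal.ofReal C * μ (CubeE n c (2 ^ k * L)) :=
          hμ c _ (by positivity)
      _ ≤ ENNReal.ofReal C * ((ENNReal.ofReal C) ^ k * μ (CubeE n c L)) :=
          mul_le_mul_right ih _
      _ = (ENNReal.ofReal C) ^ (k+1) * μ (CubeE n c L) := by ring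

lemma doubling_max {n : ℕ} {μ : Measure (EuclideanSpace ℝ (Fin n))} {C : ℝ}
    (hμ : IsDoublingE μ C) : IsDoublingE μ (max C 1) := fun c l hl =>
  (hμ c l hl).trans (mul_le_mul_left (ENNReal.ofReal_le_ofReal (le_max_left _ _)) _)


set_option maxHeartbeats 2000000 in
/-- If `K^α` is an `α`-fractional CZ kernel, elliptic in the sense of Stein, and the
operator with kernel `K^α` satisfies the two weight norm inequality with constant `𝔑`
for a pair of doubling measures, then `√(A₂^α(σ,ω)) ≤ C 𝔑`. -/
theorem elliptic_muckenhoupt_le_norm (n : ℕ) (α C_CZ ce Cσ Cω : ℝ)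
    (hn : 0 < n) (hα0 : 0 ≤ α) (hαn : α < n) (hCZ : 0 < C_CZ) (hce : 0 < ce) :
    ∃ C : ℝ, 0 < C ∧
      ∀ (K : EuclideanSpace ℝ (Fin n) → EuclideanSpace ℝ (Fin n) → ℝ)
        (u₀ : EuclideanSpace ℝ (Fin n)) (σ ω : Measure (EuclideanSpace ℝ (Fin n)))
        (N : ℝ),
        IsLocallyFiniteMeasure σ → IsLocallyFiniteMeasure ω →
        IsDoublingE σ Cσ → IsDoublingE ω Cω → 0 ≤ N →
        ‖u₀‖ = 1 →
        -- kernel size condition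
        (∀ x y, x ≠ y → |K x y| ≤ C_CZ * dist x y ^ (α - n)) →
        -- kernel smoothness in the first variable
        (∀ x x' y, x ≠ y → 2 * dist x x' ≤ dist x y →
          |K x y - K x' y| ≤ C_CZ * (dist x x' / dist x y) * dist x y ^ (α - n)) →
        -- kernel smoothness in the second variable
        (∀ x y y', x ≠ y → 2 * dist y y' ≤ dist x y →
          |K x y - K x y'| ≤ C_CZ * (dist y y' / dist x y) * dist x y ^ (α - n)) →
        -- ellipticity in the sense of Stein
        (∀ (x : EuclideanSpace ℝ (Fin n)) (t : ℝ), t ≠ 0 →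
          ce * |t| ^ (α - n) ≤ |K x (x + t • u₀)|) →
        -- the two weight norm inequality, in bilinear form on disjoint bounded sets
        (∀ (E F : Set (EuclideanSpace ℝ (Fin n))), MeasurableSet E → MeasurableSet F →
          Bornology.IsBounded E → Bornology.IsBounded F → Disjoint E F →
          |∫ x in F, ∫ y in E, K x y ∂σ ∂ω| ≤
            N * Real.sqrt (σ E).toReal * Real.sqrt (ω F).toReal) →
        -- conclusion : `A₂^α(σ,ω) ≤ (C 𝔑)²`
        ∀ (c : EuclideanSpace ℝ (Fin n)) (l : ℝ), 0 < l →
          (σ (CubeE n c l)).toReal * (ω (CubeE n c l)).toReal ≤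
            (C * N) ^ 2 * l ^ (2 * ((n : ℝ) - α)) := by
  have hsn1 : 1 ≤ Real.sqrt n := by
    rw [show (1:ℝ) = Real.sqrt 1 by simp]
    exact Real.sqrt_le_sqrt (by exact_mod_cast hn)
  have hsn0 : 0 < Real.sqrt n := lt_of_lt_of_le one_pos hsn1
  set ε := min (ce / (C_CZ * Real.sqrt n * 2 ^ (n + 2))) (1 / (4 * Real.sqrt n)) with hεdef
  have hε0 : 0 < ε := lt_min (by positivity) (by positivity)
  have hεsn : Real.sqrt n * ε ≤ 1 / 4 := by
    have h1 : ε ≤ 1 / (4 * Real.sqrt n) := min_le_right _ _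
    have h2 := (le_div_iff₀ (by positivity)).mp h1
    nlinarith
  have hkey : C_CZ * Real.sqrt n * ε * 2 ^ n ≤ ce / 4 := by
    have h1 : ε ≤ ce / (C_CZ * Real.sqrt n * 2 ^ (n + 2)) := min_le_left _ _
    have h2 := (le_div_iff₀ (by positivity)).mp h1
    have h3 : (2:ℝ) ^ (n + 2) = 4 * 2 ^ n := by ring
    nlinarith [pow_pos (two_pos (α := ℝ)) n]
  have hkey2 : C_CZ * Real.sqrt n * ε ≤ ce / 2 := by
    have h1 : (1:ℝ) ≤ 2 ^ n := one_le_pow₀ one_le_two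
    nlinarith [mul_pos (mul_pos hCZ hsn0) hε0]
  obtain ⟨k, hk⟩ : ∃ k : ℕ, 3 / ε < 2 ^ k := pow_unbounded_of_one_lt _ one_lt_two
  have hk3 : 3 ≤ 2 ^ k * ε := by
    have := (div_lt_iff₀ hε0).mp hk
    linarith
  set Cσ' := max Cσ 1 with hCσ'
  set Cω' := max Cω 1 with hCω'
  have hCσ'1 : (1:ℝ) ≤ Cσ' := le_max_right _ _
  have hCω'1 : (1:ℝ) ≤ Cω' := le_max_right _ _
  have hP0 : (0:ℝ) < Cσ' ^ k * Cω' ^ k := by positivity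
  refine ⟨Real.sqrt (Cσ' ^ k * Cω' ^ k) * (2 / ce), by positivity, ?_⟩
  intro K u₀ σ ω N hσloc hωloc hσd hωd hN hu₀ hK0 hK1 hK2 hell hbil c l hl
  haveI := hσloc; haveI := hωloc
  set la := l ^ (α - (n:ℝ)) with hladef
  have hla0 : 0 < la := Real.rpow_pos_of_pos hl _
  set y₀ := c + l • u₀ with hy₀def
  set F := CubeE n c (ε * l) with hFdef
  set E := CubeE n y₀ (ε * l) with hEdef
  set Q := CubeE n c l with hQdef
  have hεl : 0 < ε * l := by positivity
  -- distance facts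
  have hdcy₀ : dist c y₀ = l := by
    rw [dist_eq_norm, show c - y₀ = -(l • u₀) by rw [hy₀def]; abel, norm_neg, norm_smul,
      hu₀, Real.norm_eq_abs, abs_of_pos hl, mul_one]
  have hcy₀ne : c ≠ y₀ := by
    intro h; rw [h, dist_self] at hdcy₀; linarith
  have hF8 : ∀ x ∈ F, dist x c ≤ l / 8 := by
    intro x hx
    have h1 := cubeE_dist_le hεl.le hx
    have h2 := mul_le_mul_of_nonneg_right hεsn hl.le
    nlinarith
  have hE8 : ∀ y ∈ E, dist y y₀ ≤ l / 8 := by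
    intro y hy
    have h1 := cubeE_dist_le hεl.le hy
    have h2 := mul_le_mul_of_nonneg_right hεsn hl.le
    nlinarith
  have hxy_lb : ∀ x ∈ F, ∀ y ∈ E, 3 * l / 4 ≤ dist x y := by
    intro x hx y hy
    have h1 := hF8 x hx
    have h2 := hE8 y hy
    have h3 := dist_triangle4 c x y y₀
    have h4 : dist c x = dist x c := dist_comm _ _
    linarith [hdcy₀ ▸ h3]
  have hxy_ne : ∀ x ∈ F, ∀ y ∈ E, x ≠ y := by
    intro x hx y hy
    exact dist_pos.mp (by linarith [hxy_lb x hx y hy])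
  have hcy_lb : ∀ y ∈ E, l / 2 ≤ dist c y := by
    intro y hy
    have h1 := hE8 y hy
    have h2 := dist_triangle c y y₀
    linarith [hdcy₀ ▸ h2]
  have hcy_ne : ∀ y ∈ E, c ≠ y := by
    intro y hy; exact dist_pos.mp (by linarith [hcy_lb y hy])
  -- rpow comparison
  have hrpow_le : ∀ d : ℝ, l / 2 ≤ d → d ^ (α - (n:ℝ)) ≤ 2 ^ n * la := by
    intro d hd
    have h1 : d ^ (α - (n:ℝ)) ≤ (l/2) ^ (α - (n:ℝ)) :=
      Real.rpow_le_rpow_of_nonpos (by linarith) hd (by push_cast; linarith)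
    have h2 : ((l/2):ℝ) ^ (α - (n:ℝ)) = la * 2 ^ ((n:ℝ) - α) := by
      rw [show ((l/2):ℝ) = l * (2:ℝ)⁻¹ by ring,
        Real.mul_rpow hl.le (by norm_num), Real.inv_rpow (by norm_num),
        ← Real.rpow_neg (by norm_num), show -(α - (n:ℝ)) = (n:ℝ) - α by ring, hladef]
    have h3 : (2:ℝ) ^ ((n:ℝ) - α) ≤ (2:ℝ) ^ ((n:ℝ)) :=
      Real.rpow_le_rpow_of_exponent_le one_le_two (by linarith)
    have h4 : (2:ℝ) ^ ((n:ℝ)) = 2 ^ n := Real.rpow_natCast 2 n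
    calc d ^ (α - (n:ℝ)) ≤ la * 2 ^ ((n:ℝ) - α) := h2 ▸ h1
      _ ≤ la * 2 ^ n := by rw [← h4]; exact mul_le_mul_of_nonneg_left h3 hla0.le
      _ = 2 ^ n * la := mul_comm _ _
  -- kernel difference estimate
  have hKdiff : ∀ x ∈ F, ∀ y ∈ E, |K x y - K c y₀| ≤ ce / 2 * la := by
    intro x hx y hy
    -- second variable smoothness: K c y₀ vs K c y
    have hdyy₀ : dist y₀ y ≤ Real.sqrt n * ε * l / 2 := by
      rw [dist_comm]
      calc dist y y₀ ≤ Real.sqrt n * ((ε * l) / 2) := cubeE_dist_le hεl.le hy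
        _ = Real.sqrt n * ε * l / 2 := by ring
    have ht2 : |K c y₀ - K c y| ≤ ce / 4 * la := by
      have hcond : 2 * dist y₀ y ≤ dist c y₀ := by
        rw [hdcy₀]; nlinarith [hE8 y hy, dist_comm y₀ y]
      have := hK2 c y₀ y hcy₀ne hcond
      rw [hdcy₀] at this
      have hq : C_CZ * (dist y₀ y / l) * la ≤ ce / 4 * la := by
        apply mul_le_mul_of_nonneg_right _ hla0.le
        have hdl : dist y₀ y / l ≤ Real.sqrt n * ε / 2 := by
          rw [div_le_iff₀ hl]; nlinarith
        calc C_CZ * (dist y₀ y / l) ≤ C_CZ * (Real.sqrt n * ε / 2) :=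
              mul_le_mul_of_nonneg_left hdl hCZ.le
          _ ≤ ce / 4 := by nlinarith
      exact this.trans hq
    -- first variable smoothness: K c y vs K x y
    have ht1 : |K c y - K x y| ≤ ce / 4 * la := by
      have hcylb := hcy_lb y hy
      have hcond : 2 * dist c x ≤ dist c y := by
        have := hF8 x hx; rw [dist_comm c x]; linarith
      have := hK1 c x y (hcy_ne y hy) hcond
      have hrat : dist c x / dist c y ≤ Real.sqrt n * ε := by
        rw [div_le_iff₀ (by linarith : (0:ℝ) < dist c y)]
        have h1 : dist c x ≤ Real.sqrt n * ε * l / 2 := by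
          rw [dist_comm]
          calc dist x c ≤ Real.sqrt n * ((ε * l) / 2) := cubeE_dist_le hεl.le hx
            _ = Real.sqrt n * ε * l / 2 := by ring
        nlinarith [mul_pos hsn0 hε0]
      have hpow := hrpow_le (dist c y) hcylb
      calc |K c y - K x y| ≤ C_CZ * (dist c x / dist c y) * dist c y ^ (α - (n:ℝ)) := by
            exact_mod_cast this
        _ ≤ C_CZ * (Real.sqrt n * ε) * (2 ^ n * la) := by
            apply mul_le_mul (mul_le_mul_of_nonneg_left hrat hCZ.le) hpow
              (Real.rpow_nonneg dist_nonneg _)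
            positivity
        _ ≤ ce / 4 * la := by nlinarith [hla0]
    calc |K x y - K c y₀| ≤ |K c y - K x y| + |K c y₀ - K c y| := by
          rw [abs_sub_comm (K c y) (K x y)]
          calc |K x y - K c y₀| = |(K x y - K c y) + (K c y - K c y₀)| := by ring_nf
            _ ≤ |K x y - K c y| + |K c y - K c y₀| := abs_add_le _ _
            _ = |K x y - K c y| + |K c y₀ - K c y| := by rw [abs_sub_comm (K c y₀)]
      _ ≤ ce / 4 * la + ce / 4 * la := add_le_add ht1 ht2
      _ = ce / 2 * la := by ring
  -- sign
  set s : ℝ := if 0 ≤ K c y₀ then 1 else -1 with hsdef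
  have hs_abs : |s| = 1 := by
    rw [hsdef]; split_ifs <;> simp
  have hsK : s * K c y₀ = |K c y₀| := by
    rw [hsdef]; split_ifs with h
    · rw [one_mul, abs_of_nonneg h]
    · rw [abs_of_neg (lt_of_not_ge h)]; ring
  -- pointwise lower bound
  have hβ : ∀ x ∈ F, ∀ y ∈ E, ce / 2 * la ≤ s * K x y := by
    intro x hx y hy
    have h1 : ce * la ≤ |K c y₀| := by
      have := hell c l hl.ne'
      rw [abs_of_pos hl, ← hy₀def] at this
      exact this
    have h2 := hKdiff x hx y hy
    have h3 : -(ce / 2 * la) ≤ s * (K x y - K c y₀) := by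
      have h4 := neg_abs_le (s * (K x y - K c y₀))
      rw [abs_mul, hs_abs, one_mul] at h4
      linarith
    have h5 : s * K x y = s * K c y₀ + s * (K x y - K c y₀) := by ring
    rw [h5, hsK]
    linarith
  -- pointwise upper bound
  have hKub : ∀ x ∈ F, ∀ y ∈ E, |K x y| ≤ C_CZ * (2 ^ n * la) := by
    intro x hx y hy
    have h1 := hK0 x y (hxy_ne x hx y hy)
    have h2 := hrpow_le (dist x y) (by linarith [hxy_lb x hx y hy])
    calc |K x y| ≤ C_CZ * dist x y ^ (α - (n:ℝ)) := by exact_mod_cast h1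
      _ ≤ C_CZ * (2 ^ n * la) := mul_le_mul_of_nonneg_left h2 hCZ.le
  -- Lipschitz constants
  set Lc := C_CZ * (2 / l) * (2 ^ n * la) with hLcdef
  have hLc0 : 0 ≤ Lc := by positivity
  -- Lipschitz in second variable on E
  have hLip2 : ∀ x ∈ F, ∀ y ∈ E, ∀ y' ∈ E, |K x y - K x y'| ≤ Lc * dist y y' := by
    intro x hx y hy y' hy'
    have hdyy' : dist y y' ≤ l / 4 := by
      have := dist_triangle y y₀ y'
      have := hE8 y hy
      have := hE8 y' hy'
      rw [dist_comm y' y₀] at *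
      linarith [dist_comm y₀ y', hE8 y' hy']
    have hdxy := hxy_lb x hx y hy
    have hcond : 2 * dist y y' ≤ dist x y := by linarith
    have := hK2 x y y' (hxy_ne x hx y hy) hcond
    have hpow := hrpow_le (dist x y) (by linarith)
    have hrat : dist y y' / dist x y ≤ dist y y' * (2 / l) := by
      rw [div_le_iff₀ (by linarith : (0:ℝ) < dist x y)]
      have h0 : 0 ≤ dist y y' := dist_nonneg
      have h1 : (1:ℝ) ≤ 2 / l * dist x y := by
        rw [div_mul_eq_mul_div, le_div_iff₀ hl]; linarith
      nlinarith [mul_le_mul_of_nonneg_left h1 h0]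
    calc |K x y - K x y'| ≤ C_CZ * (dist y y' / dist x y) * dist x y ^ (α - (n:ℝ)) := by
          exact_mod_cast this
      _ ≤ C_CZ * (dist y y' * (2 / l)) * (2 ^ n * la) := by
          apply mul_le_mul (mul_le_mul_of_nonneg_left hrat hCZ.le) hpow
            (Real.rpow_nonneg dist_nonneg _)
          positivity
      _ = Lc * dist y y' := by rw [hLcdef]; ring
  -- Lipschitz in first variable on F
  have hLip1 : ∀ x ∈ F, ∀ x' ∈ F, ∀ y ∈ E, |K x y - K x' y| ≤ Lc * dist x x' := by
    intro x hx x' hx' y hy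
    have hdxx' : dist x x' ≤ l / 4 := by
      have h1 := dist_triangle x c x'
      have h2 := hF8 x hx
      have h3 := hF8 x' hx'
      linarith [dist_comm c x', hF8 x' hx']
    have hdxy := hxy_lb x hx y hy
    have hcond : 2 * dist x x' ≤ dist x y := by linarith
    have := hK1 x x' y (hxy_ne x hx y hy) hcond
    have hpow := hrpow_le (dist x y) (by linarith)
    have hrat : dist x x' / dist x y ≤ dist x x' * (2 / l) := by
      rw [div_le_iff₀ (by linarith : (0:ℝ) < dist x y)]
      have h0 : 0 ≤ dist x x' := dist_nonneg
      have h1 : (1:ℝ) ≤ 2 / l * dist x y := by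
        rw [div_mul_eq_mul_div, le_div_iff₀ hl]; linarith
      nlinarith [mul_le_mul_of_nonneg_left h1 h0]
    calc |K x y - K x' y| ≤ C_CZ * (dist x x' / dist x y) * dist x y ^ (α - (n:ℝ)) := by
          exact_mod_cast this
      _ ≤ C_CZ * (dist x x' * (2 / l)) * (2 ^ n * la) := by
          apply mul_le_mul (mul_le_mul_of_nonneg_left hrat hCZ.le) hpow
            (Real.rpow_nonneg dist_nonneg _)
          positivity
      _ = Lc * dist x x' := by rw [hLcdef]; ring
  -- measurability and finiteness
  have hmE : MeasurableSet E := (cubeE_isClosed _ _ _).measurableSet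
  have hmF : MeasurableSet F := (cubeE_isClosed _ _ _).measurableSet
  have hσE : σ E < ⊤ := (cubeE_isCompact _ _ hεl.le).measure_lt_top
  have hωF : ω F < ⊤ := (cubeE_isCompact _ _ hεl.le).measure_lt_top
  have hσQ : σ Q < ⊤ := (cubeE_isCompact _ _ hl.le).measure_lt_top
  have hωQ : ω Q < ⊤ := (cubeE_isCompact _ _ hl.le).measure_lt_top
  -- inner integrability
  have hcontE : ∀ x ∈ F, ContinuousOn (fun y => K x y) E := by
    intro x hx
    have : LipschitzOnWith Lc.toNNReal (fun y => K x y) E := by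
      apply LipschitzOnWith.of_dist_le_mul
      intro y hy y' hy'
      rw [Real.dist_eq]
      calc |K x y - K x y'| ≤ Lc * dist y y' := hLip2 x hx y hy y' hy'
        _ ≤ Lc.toNNReal * dist y y' :=
            mul_le_mul_of_nonneg_right (Real.le_coe_toNNReal _) dist_nonneg
    exact this.continuousOn
  have hIntE : ∀ x ∈ F, IntegrableOn (fun y => K x y) E σ := by
    intro x hx
    apply Integrable.mono' (g := fun _ => C_CZ * (2 ^ n * la))
      (integrableOn_const hσE.ne)
      ((hcontE x hx).aestronglyMeasurable hmE)
    filter_upwards [ae_restrict_mem hmE] with y hy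
    simpa [Real.norm_eq_abs] using hKub x hx y hy
  -- the inner integral function
  set g : EuclideanSpace ℝ (Fin n) → ℝ := fun x => ∫ y in E, K x y ∂σ with hgdef
  have hg_lb : ∀ x ∈ F, ce / 2 * la * (σ E).toReal ≤ s * g x := by
    intro x hx
    rw [hgdef, ← integral_const_mul]
    have h1 : ∫ _ in E, (ce / 2 * la) ∂σ ≤ ∫ y in E, s * K x y ∂σ :=
      setIntegral_mono_on (integrableOn_const hσE.ne)
        ((hIntE x hx).const_mul s) hmE (fun y hy => hβ x hx y hy)
    rwa [setIntegral_const, smul_eq_mul, mul_comm] at h1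
  have hg_ub : ∀ x ∈ F, |g x| ≤ C_CZ * (2 ^ n * la) * (σ E).toReal := by
    intro x hx
    rw [hgdef, ← Real.norm_eq_abs]
    exact norm_setIntegral_le_of_norm_le_const hσE
      (fun y hy => by simpa [Real.norm_eq_abs] using hKub x hx y hy)
  have hg_lip : ∀ x ∈ F, ∀ x' ∈ F,
      |g x - g x'| ≤ Lc * (σ E).toReal * dist x x' := by
    intro x hx x' hx'
    have h1 : g x - g x' = ∫ y in E, (K x y - K x' y) ∂σ :=
      (integral_sub (hIntE x hx) (hIntE x' hx')).symm
    rw [h1, ← Real.norm_eq_abs]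
    calc ‖∫ y in E, (K x y - K x' y) ∂σ‖ ≤ (Lc * dist x x') * (σ E).toReal :=
          norm_setIntegral_le_of_norm_le_const hσE
            (fun y hy => by
              simpa [Real.norm_eq_abs] using hLip1 x hx x' hx' y hy)
      _ = Lc * (σ E).toReal * dist x x' := by ring
  have hcontF : ContinuousOn g F := by
    have : LipschitzOnWith (Lc * (σ E).toReal).toNNReal g F := by
      apply LipschitzOnWith.of_dist_le_mul
      intro x hx x' hx'
      rw [Real.dist_eq]
      calc |g x - g x'| ≤ Lc * (σ E).toReal * dist x x' := hg_lip x hx x' hx'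
        _ ≤ (Lc * (σ E).toReal).toNNReal * dist x x' :=
            mul_le_mul_of_nonneg_right (Real.le_coe_toNNReal _) dist_nonneg
    exact this.continuousOn
  have hIntF : IntegrableOn g F ω := by
    apply Integrable.mono' (g := fun _ => C_CZ * (2 ^ n * la) * (σ E).toReal)
      (integrableOn_const hωF.ne)
      (hcontF.aestronglyMeasurable hmF)
    filter_upwards [ae_restrict_mem hmF] with x hx
    simpa [Real.norm_eq_abs] using hg_ub x hx
  -- outer integral lower bound
  have houter : ce / 2 * la * (σ E).toReal * (ω F).toReal ≤ s * ∫ x in F, g x ∂ω := by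
    rw [← integral_const_mul]
    have h1 : ∫ _ in F, (ce / 2 * la * (σ E).toReal) ∂ω ≤ ∫ x in F, s * g x ∂ω :=
      setIntegral_mono_on (integrableOn_const hωF.ne)
        (hIntF.const_mul s) hmF (fun x hx => hg_lb x hx)
    rwa [setIntegral_const, smul_eq_mul, mul_comm] at h1
  -- apply the bilinear hypothesis
  have hdisj : Disjoint E F := by
    rw [Set.disjoint_left]
    intro a haE haF
    have := hxy_lb a haF a haE
    rw [dist_self] at this
    linarith
  have hbE : Bornology.IsBounded E :=
    (cubeE_isCompact _ _ hεl.le).isBounded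
  have hbF : Bornology.IsBounded F :=
    (cubeE_isCompact _ _ hεl.le).isBounded
  have hbil2 := hbil E F hmE hmF hbE hbF hdisj
  have hkey3 : ce / 2 * la * (σ E).toReal * (ω F).toReal ≤
      N * Real.sqrt (σ E).toReal * Real.sqrt (ω F).toReal := by
    have h2 : s * ∫ x in F, g x ∂ω ≤ |∫ x in F, g x ∂ω| := by
      calc s * ∫ x in F, g x ∂ω ≤ |s * ∫ x in F, g x ∂ω| := le_abs_self _
        _ = |∫ x in F, g x ∂ω| := by rw [abs_mul, hs_abs, one_mul]
    exact le_trans (le_trans (houter) h2) hbil2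
  -- algebra : bound on the product of small measures
  set a := (σ E).toReal with hadef
  set b := (ω F).toReal with hbdef
  have ha0 : 0 ≤ a := ENNReal.toReal_nonneg
  have hb0 : 0 ≤ b := ENNReal.toReal_nonneg
  set w := l ^ ((n:ℝ) - α) with hwdef
  have hw0 : 0 < w := Real.rpow_pos_of_pos hl _
  have hinv : la * w = 1 := by
    rw [hladef, hwdef, ← Real.rpow_add hl]
    norm_num
  have halg : a * b ≤ (2 / ce * N * w) ^ 2 := by
    set r := Real.sqrt (a * b) with hrdef
    have hr0 : 0 ≤ r := Real.sqrt_nonneg _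
    have hr2 : r ^ 2 = a * b := Real.sq_sqrt (mul_nonneg ha0 hb0)
    have hrr : Real.sqrt a * Real.sqrt b = r := (Real.sqrt_mul ha0 b).symm
    have hineq : ce / 2 * la * r ^ 2 ≤ N * r := by
      calc ce / 2 * la * r ^ 2 = ce / 2 * la * a * b := by rw [hr2]; ring
        _ ≤ N * Real.sqrt a * Real.sqrt b := hkey3
        _ = N * r := by rw [mul_assoc, hrr]
    rcases eq_or_lt_of_le hr0 with h | h
    · have hab : a * b = 0 := by rw [← hr2, ← h]; ring
      rw [hab]; positivity
    · have h6 : (ce / 2 * la * r) * r ≤ N * r := by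
        calc (ce / 2 * la * r) * r = ce / 2 * la * r ^ 2 := by ring
          _ ≤ N * r := hineq
      have h5 : ce / 2 * la * r ≤ N := (mul_le_mul_iff_of_pos_right h).mp h6
      have h8 : (ce / 2 * la * r) * (2 / ce * w) ≤ N * (2 / ce * w) :=
        mul_le_mul_of_nonneg_right h5 (by positivity)
      have h9 : (ce / 2 * la * r) * (2 / ce * w) = r := by
        have : (ce / 2 * la * r) * (2 / ce * w) = (la * w) * r * (ce / ce) := by ring
        rw [this, hinv, div_self hce.ne', mul_one, one_mul]
      have h7 : r ≤ 2 / ce * N * w := by rw [h9] at h8; linarith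
      calc a * b = r ^ 2 := hr2.symm
        _ ≤ (2 / ce * N * w) ^ 2 := pow_le_pow_left₀ hr0 h7 2
  -- doubling chains
  have hσd' := doubling_max hσd
  have hωd' := doubling_max hωd
  have hsubQF : Q ⊆ CubeE n c (2 ^ k * (ε * l)) := by
    rw [hQdef]
    apply cubeE_mono
    nlinarith [mul_le_mul_of_nonneg_right hk3 hl.le]
  have hsubQE : Q ⊆ CubeE n y₀ (2 ^ k * (ε * l)) := by
    intro x hx
    simp only [hQdef, CubeE, Set.mem_setOf_eq] at hx ⊢
    intro i
    have h1 : |x i - c i| ≤ l / 2 := hx i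
    have h2 : |u₀ i| ≤ 1 := by rw [← hu₀]; exact euclid_coord_le u₀ i
    have h3 : y₀ i = c i + l * u₀ i := by rw [hy₀def]; simp
    have h4 : |x i - y₀ i| ≤ l / 2 + l := by
      rw [h3, show x i - (c i + l * u₀ i) = (x i - c i) - l * u₀ i by ring]
      calc |(x i - c i) - l * u₀ i| ≤ |x i - c i| + |l * u₀ i| := abs_sub _ _
        _ ≤ l / 2 + l := by
            rw [abs_mul, abs_of_pos hl]
            have := mul_le_mul_of_nonneg_left h2 hl.le
            linarith
    have h5 : l / 2 + l ≤ 2 ^ k * (ε * l) / 2 := by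
      nlinarith [mul_le_mul_of_nonneg_right hk3 hl.le]
    linarith
  have hQσ : (σ Q).toReal ≤ Cσ' ^ k * a := by
    have h1 : σ Q ≤ (ENNReal.ofReal Cσ') ^ k * σ E :=
      (measure_mono hsubQE).trans (doubling_iter hσd' y₀ hεl k)
    have h2 : (ENNReal.ofReal Cσ') ^ k * σ E ≠ ⊤ :=
      ENNReal.mul_ne_top (ENNReal.pow_ne_top ENNReal.ofReal_ne_top) hσE.ne
    calc (σ Q).toReal ≤ ((ENNReal.ofReal Cσ') ^ k * σ E).toReal := ENNReal.toReal_mono h2 h1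
      _ = Cσ' ^ k * a := by
          rw [ENNReal.toReal_mul, ENNReal.toReal_pow, ENNReal.toReal_ofReal (by linarith)]
  have hQω : (ω Q).toReal ≤ Cω' ^ k * b := by
    have h1 : ω Q ≤ (ENNReal.ofReal Cω') ^ k * ω F :=
      (measure_mono hsubQF).trans (doubling_iter hωd' c hεl k)
    have h2 : (ENNReal.ofReal Cω') ^ k * ω F ≠ ⊤ :=
      ENNReal.mul_ne_top (ENNReal.pow_ne_top ENNReal.ofReal_ne_top) hωF.ne
    calc (ω Q).toReal ≤ ((ENNReal.ofReal Cω') ^ k * ω F).toReal := ENNReal.toReal_mono h2 h1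
      _ = Cω' ^ k * b := by
          rw [ENNReal.toReal_mul, ENNReal.toReal_pow, ENNReal.toReal_ofReal (by linarith)]
  -- conclusion
  have hsq : Real.sqrt (Cσ' ^ k * Cω' ^ k) ^ 2 = Cσ' ^ k * Cω' ^ k := Real.sq_sqrt hP0.le
  have h2l : l ^ (2 * ((n:ℝ) - α)) = w * w := by
    rw [hwdef, ← Real.rpow_add hl]
    congr 1
    ring
  calc (σ (CubeE n c l)).toReal * (ω (CubeE n c l)).toReal
      ≤ (Cσ' ^ k * a) * (Cω' ^ k * b) :=
        mul_le_mul hQσ hQω ENNReal.toReal_nonneg (by positivity)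
    _ = (Cσ' ^ k * Cω' ^ k) * (a * b) := by ring
    _ ≤ (Cσ' ^ k * Cω' ^ k) * ((2 / ce * N * w) ^ 2) :=
        mul_le_mul_of_nonneg_left halg (by positivity)
    _ = (Real.sqrt (Cσ' ^ k * Cω' ^ k) * (2 / ce) * N) ^ 2 * l ^ (2 * ((n:ℝ) - α)) := by
        rw [h2l]
        linear_combination (-(2 / ce * N) ^ 2 * (w * w)) * hsq
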